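/- arXiv:1710.09447 — 4 statements merged into one kernel-verified Lean document; each statement's English description precedes it below -/
import Mathlib

section
/- Let H be a symmetric d×d real matrix with ‖H‖₂ ≤ L₁, and let M = I - H/L₁. If a unit vector v satisfies vᵀMv ≥ (1-δ)(1-ε)·λ_max(M) with δ, ε ∈ (0,1), then λ_min(H) ≥ vᵀHv - 2L₁(δ+ε). -/
open scoped RealInnerProductSpace

noncomputable def lambdaMin {d : ℕ}
    (H : EuclideanSpace ℝ (Fin d) →L[ℝ] EuclideanSpace ℝ (Fin d)) : ℝ :=
  ⨅ v : {v : EuclideanSpace ℝ (Fin d) // ‖v‖ = 1}, ⟪H v.1, v.1⟫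

noncomputable def lambdaMax {d : ℕ}
    (H : EuclideanSpace ℝ (Fin d) →L[ℝ] EuclideanSpace ℝ (Fin d)) : ℝ :=
  ⨆ v : {v : EuclideanSpace ℝ (Fin d) // ‖v‖ = 1}, ⟪H v.1, v.1⟫

theorem stmt_0 {d : ℕ} (L₁ δ ε : ℝ) (hL₁ : 0 < L₁)
    (hδ : δ ∈ Set.Ioo (0:ℝ) 1) (hε : ε ∈ Set.Ioo (0:ℝ) 1)
    (H : EuclideanSpace ℝ (Fin d) →L[ℝ] EuclideanSpace ℝ (Fin d))
    (hsym : IsSelfAdjoint H) (hnorm : ‖H‖ ≤ L₁)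
    (M : EuclideanSpace ℝ (Fin d) →L[ℝ] EuclideanSpace ℝ (Fin d))
    (hM : M = ContinuousLinearMap.id ℝ (EuclideanSpace ℝ (Fin d)) - L₁⁻¹ • H)
    (v : EuclideanSpace ℝ (Fin d)) (hv : ‖v‖ = 1)
    (hray : ⟪M v, v⟫ ≥ (1 - δ) * (1 - ε) * lambdaMax M) :
    lambdaMin H ≥ ⟪H v, v⟫ - 2 * L₁ * (δ + ε) := by
  obtain ⟨hδ0, hδ1⟩ := hδ
  obtain ⟨hε0, hε1⟩ := hε
  set a := L₁⁻¹ with ha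
  have ha0 : 0 < a := inv_pos.mpr hL₁
  haveI : Nonempty {v : EuclideanSpace ℝ (Fin d) // ‖v‖ = 1} := ⟨⟨v, hv⟩⟩
  set f : {v : EuclideanSpace ℝ (Fin d) // ‖v‖ = 1} → ℝ :=
    fun u => ⟪H u.1, u.1⟫ with hf
  have hbound : ∀ u : {v : EuclideanSpace ℝ (Fin d) // ‖v‖ = 1},
      |f u| ≤ L₁ := by
    intro u
    calc |f u| ≤ ‖H u.1‖ * ‖u.1‖ := abs_real_inner_le_norm _ _
      _ ≤ ‖H‖ * ‖u.1‖ * ‖u.1‖ :=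
          mul_le_mul_of_nonneg_right (H.le_opNorm _) (norm_nonneg _)
      _ = ‖H‖ := by rw [u.2]; ring
      _ ≤ L₁ := hnorm
  have hMval : ∀ u : {v : EuclideanSpace ℝ (Fin d) // ‖v‖ = 1},
      ⟪M u.1, u.1⟫ = 1 - a * f u := by
    intro u
    rw [hM]
    simp only [ContinuousLinearMap.sub_apply, ContinuousLinearMap.smul_apply,
      ContinuousLinearMap.id_apply, inner_sub_left, real_inner_smul_left]
    rw [real_inner_self_eq_norm_sq, u.2]
    ring
  have hbddf : BddBelow (Set.range f) := by
    refine ⟨-L₁, ?_⟩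
    rintro x ⟨u, rfl⟩
    have := abs_le.mp (hbound u)
    linarith [this.1]
  have hbddM : BddAbove (Set.range fun u : {v : EuclideanSpace ℝ (Fin d) // ‖v‖ = 1} =>
      ⟪M u.1, u.1⟫) := by
    refine ⟨1 + a * L₁, ?_⟩
    rintro x ⟨u, rfl⟩
    show (⟪M u.1, u.1⟫ : ℝ) ≤ 1 + a * L₁
    rw [hMval u]
    have h1 := (abs_le.mp (hbound u)).1
    nlinarith
  set m := lambdaMin H with hm
  set t := lambdaMax M with ht
  set q := (⟪H v, v⟫ : ℝ) with hq
  have hqf : q = f ⟨v, hv⟩ := rfl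
  -- m ≤ L₁ and -L₁ ≤ m
  have hmq : m ≤ q := by
    rw [hqf]; exact ciInf_le hbddf _
  have hqL : q ≤ L₁ := by rw [hqf]; exact (abs_le.mp (hbound _)).2
  have hmL : -L₁ ≤ m := le_ciInf fun u => (abs_le.mp (hbound u)).1
  -- t ≥ 1 - a * m
  have hmt : 1 - a * m ≤ t := by
    have hkey : (1 - t) / a ≤ m := by
      refine le_ciInf fun u => ?_
      have h1 : ⟪M u.1, u.1⟫ ≤ t := le_ciSup hbddM u
      rw [hMval u] at h1
      rw [div_le_iff₀ ha0]
      nlinarith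
    rw [div_le_iff₀ ha0] at hkey
    nlinarith
  -- rewrite hray
  have hray' : 1 - a * q ≥ (1 - δ) * (1 - ε) * t := by
    have := hMval ⟨v, hv⟩
    simp only at this
    rw [this] at hray
    exact hray
  have hc : (0:ℝ) ≤ (1 - δ) * (1 - ε) := by nlinarith
  have hineq : 1 - a * q ≥ (1 - δ) * (1 - ε) * (1 - a * m) :=
    le_trans (mul_le_mul_of_nonneg_left hmt hc) hray'
  have hx1 : a * m ≤ 1 := by
    have : a * m ≤ a * L₁ := mul_le_mul_of_nonneg_left (hmq.trans hqL) ha0.le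
    rwa [ha, inv_mul_cancel₀ (ne_of_gt hL₁)] at this
  have hx2 : -1 ≤ a * m := by
    have : a * (-L₁) ≤ a * m := mul_le_mul_of_nonneg_left hmL ha0.le
    rw [mul_neg, ha, inv_mul_cancel₀ (ne_of_gt hL₁)] at this
    linarith
  have key : a * q - 2 * (δ + ε) ≤ a * m := by
    nlinarith [mul_nonneg (by linarith : (0:ℝ) ≤ 1 + a * m)
        (by nlinarith : (0:ℝ) ≤ δ + ε - δ * ε), mul_pos hδ0 hε0]
  have hm' : L₁ * (a * m) = m := by
    rw [ha, ← mul_assoc, mul_inv_cancel₀ (ne_of_gt hL₁), one_mul]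
  have hq' : L₁ * (a * q) = q := by
    rw [ha, ← mul_assoc, mul_inv_cancel₀ (ne_of_gt hL₁), one_mul]
  have hfin := mul_le_mul_of_nonneg_left key hL₁.le
  nlinarith [hfin, hm', hq']
end

section
/- Suppose f : ℝ^d → ℝ is twice differentiable with L₂-Lipschitz Hessian, g ∈ ℝ^d satisfies ‖g - ∇f(x)‖ ≤ ε₄ with ε₄ ≤ ε₂²/(24L₂), H is a symmetric matrix with ‖H - ∇²f(x)‖₂ ≤ ε₂/24, and v is a unit vector. Let η = (ε₂/L₂)·sign(vᵀg) and x⁺ = x - η v. Then f(x⁺) - f(x) ≤ ε₂³/(24L₂²) + ε₂³/(48L₂²) + (ε₂²/(2L₂²))·vᵀHv + ε₂³/(6L₂²), i.e., f(x) - f(x⁺) ≥ -(ε₂²/(2L₂²))·vᵀHv - 11ε₂³/(48L₂²). -/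
open scoped RealInnerProductSpace

noncomputable def sgn (t : ℝ) : ℝ := if 0 ≤ t then 1 else -1

lemma abs_sgn (t : ℝ) : |sgn t| = 1 := by
  unfold sgn; split <;> simp

lemma sgn_mul_self (t : ℝ) : sgn t * t = |t| := by
  unfold sgn
  split
  · rw [abs_of_nonneg ‹_›]; ring
  · rw [abs_of_neg (lt_of_not_ge ‹_›)]; ring


theorem taylor_cubic {d : ℕ} (L₂ : ℝ) (f : EuclideanSpace ℝ (Fin d) → ℝ)
    (hf : Differentiable ℝ f) (hf' : Differentiable ℝ (gradient f))
    (hlip : ∀ x y, ‖fderiv ℝ (gradient f) x - fderiv ℝ (gradient f) y‖ ≤ L₂ * ‖x - y‖)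
    (x u : EuclideanSpace ℝ (Fin d)) :
    f (x + u) ≤ f x + ⟪gradient f x, u⟫
      + (1/2) * ⟪(fderiv ℝ (gradient f) x) u, u⟫ + L₂ / 6 * ‖u‖ ^ 3 := by
  set H₀ := fderiv ℝ (gradient f) x with hH₀
  have hline : ∀ t : ℝ, HasDerivAt (fun s : ℝ => x + s • u) u t := by
    intro t
    simpa using ((hasDerivAt_id t).smul_const u).const_add x
  set p : ℝ → EuclideanSpace ℝ (Fin d) := fun t => gradient f (x + t • u) with hp_def
  have hp : ∀ t : ℝ, HasDerivAt p ((fderiv ℝ (gradient f) (x + t • u)) u) t := by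
    intro t
    exact
      ((hf' (x + t • u)).hasFDerivAt.comp_hasDerivAt t (hline t))
  have hp0 : p 0 = gradient f x := by simp [hp_def]
  -- Step 1: gradient bound along the segment
  have step1 : ∀ t ∈ Set.Icc (0:ℝ) 1,
      ‖p t - p 0 - t • (H₀ u)‖ ≤ L₂ * ‖u‖ ^ 2 / 2 * t ^ 2 := by
    have hF : ∀ t : ℝ, HasDerivAt (fun s => p s - p 0 - s • (H₀ u))
        ((fderiv ℝ (gradient f) (x + t • u)) u - H₀ u) t := by
      intro t
      have h2 : HasDerivAt (fun s : ℝ => s • (H₀ u)) (H₀ u) t := by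
        simpa using (hasDerivAt_id t).smul_const (H₀ u)
      exact ((hp t).sub_const (p 0)).sub h2
    have hB : ∀ t : ℝ, HasDerivAt (fun s : ℝ => L₂ * ‖u‖ ^ 2 / 2 * s ^ 2)
        (L₂ * ‖u‖ ^ 2 * t) t := by
      intro t
      have h := (hasDerivAt_pow 2 t).const_mul (L₂ * ‖u‖ ^ 2 / 2)
      refine h.congr_deriv ?_
      push_cast
      ring
    have bound : ∀ t ∈ Set.Ico (0:ℝ) 1,
        ‖(fderiv ℝ (gradient f) (x + t • u)) u - H₀ u‖ ≤ L₂ * ‖u‖ ^ 2 * t := by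
      intro t ht
      have h1 := (fderiv ℝ (gradient f) (x + t • u) - H₀).le_opNorm u
      rw [ContinuousLinearMap.sub_apply] at h1
      have h2 : ‖fderiv ℝ (gradient f) (x + t • u) - H₀‖ ≤ L₂ * (t * ‖u‖) := by
        have h3 := hlip (x + t • u) x
        rw [add_sub_cancel_left, norm_smul, Real.norm_eq_abs, abs_of_nonneg ht.1] at h3
        exact h3
      calc ‖(fderiv ℝ (gradient f) (x + t • u)) u - H₀ u‖
          ≤ L₂ * (t * ‖u‖) * ‖u‖ :=
            h1.trans (mul_le_mul_of_nonneg_right h2 (norm_nonneg u))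
        _ = L₂ * ‖u‖ ^ 2 * t := by ring
    intro t ht
    have h := image_norm_le_of_norm_deriv_right_le_deriv_boundary
      (f := fun s => p s - p 0 - s • (H₀ u))
      (f' := fun s => (fderiv ℝ (gradient f) (x + s • u)) u - H₀ u)
      (a := 0) (b := 1)
      (fun s _ => (hF s).continuousAt.continuousWithinAt)
      (fun s _ => (hF s).hasDerivWithinAt)
      (B := fun s => L₂ * ‖u‖ ^ 2 / 2 * s ^ 2) (B' := fun s => L₂ * ‖u‖ ^ 2 * s)
      (by norm_num) hB bound ht
    simpa using h
  -- Step 2: function bound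
  have hr : ∀ t : ℝ, HasDerivAt
      (fun s => f (x + s • u) - f x - s * ⟪gradient f x, u⟫
        - s ^ 2 / 2 * ⟪H₀ u, u⟫)
      (⟪p t - p 0 - t • (H₀ u), u⟫) t := by
    intro t
    have hfd : HasDerivAt (fun s => f (x + s • u)) (⟪p t, u⟫) t := by
      have hgrad : HasGradientAt f (p t) (x + t • u) := (hf (x + t • u)).hasGradientAt
      have hfdv := hasGradientAt_iff_hasFDerivAt.mp hgrad
      have h := hfdv.comp_hasDerivAt t (hline t)
      simp [Function.comp, InnerProductSpace.toDual_apply_apply] at h; exact h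
    have h1 : HasDerivAt (fun s : ℝ => s * ⟪gradient f x, u⟫) ⟪gradient f x, u⟫ t := by
      simpa using (hasDerivAt_id t).mul_const (⟪gradient f x, u⟫)
    have h2 := ((hasDerivAt_pow 2 t).div_const 2).mul_const (⟪H₀ u, u⟫)
    have hcomb := ((hfd.sub_const (f x)).sub h1).sub h2
    refine hcomb.congr_deriv ?_
    rw [inner_sub_left, inner_sub_left, real_inner_smul_left, hp0]
    push_cast
    ring
  have bound2 : ∀ t ∈ Set.Ico (0:ℝ) 1,
      ‖⟪p t - p 0 - t • (H₀ u), u⟫‖ ≤ L₂ * ‖u‖ ^ 3 / 2 * t ^ 2 := by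
    intro t ht
    have h1 := abs_real_inner_le_norm (p t - p 0 - t • (H₀ u)) u
    have h2 := step1 t ⟨ht.1, ht.2.le⟩
    calc ‖⟪p t - p 0 - t • (H₀ u), u⟫‖
        ≤ ‖p t - p 0 - t • (H₀ u)‖ * ‖u‖ := by
          rw [Real.norm_eq_abs]; exact h1
      _ ≤ (L₂ * ‖u‖ ^ 2 / 2 * t ^ 2) * ‖u‖ :=
          mul_le_mul_of_nonneg_right h2 (norm_nonneg u)
      _ = L₂ * ‖u‖ ^ 3 / 2 * t ^ 2 := by ring
  have hB2 : ∀ t : ℝ, HasDerivAt (fun s : ℝ => L₂ * ‖u‖ ^ 3 / 6 * s ^ 3)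
      (L₂ * ‖u‖ ^ 3 / 2 * t ^ 2) t := by
    intro t
    have h := (hasDerivAt_pow 3 t).const_mul (L₂ * ‖u‖ ^ 3 / 6)
    refine h.congr_deriv ?_
    push_cast
    ring
  have final := image_norm_le_of_norm_deriv_right_le_deriv_boundary
    (f := fun s => f (x + s • u) - f x - s * ⟪gradient f x, u⟫ - s ^ 2 / 2 * ⟪H₀ u, u⟫)
    (f' := fun s => ⟪p s - p 0 - s • (H₀ u), u⟫)
    (a := 0) (b := 1)
    (fun s _ => (hr s).continuousAt.continuousWithinAt)
    (fun s _ => (hr s).hasDerivWithinAt)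
    (B := fun s => L₂ * ‖u‖ ^ 3 / 6 * s ^ 3) (B' := fun s => L₂ * ‖u‖ ^ 3 / 2 * s ^ 2)
    (by norm_num) hB2 bound2 (Set.right_mem_Icc.2 zero_le_one)
  have habs : |f (x + u) - f x - ⟪gradient f x, u⟫ - 1 / 2 * ⟪H₀ u, u⟫|
      ≤ L₂ * ‖u‖ ^ 3 / 6 := by
    have h := final
    simp only [Real.norm_eq_abs, one_smul, one_mul, one_pow, mul_one] at h
    convert h using 2
  have h := (abs_le.mp habs).2
  rw [hH₀] at h
  linarith


theorem stmt_3 {d : ℕ} (L₂ ε₂ ε₄ : ℝ) (hL₂ : 0 < L₂) (hε₂ : 0 < ε₂)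
    (f : EuclideanSpace ℝ (Fin d) → ℝ)
    (hf : Differentiable ℝ f) (hf' : Differentiable ℝ (gradient f))
    (hlip : ∀ x y, ‖fderiv ℝ (gradient f) x - fderiv ℝ (gradient f) y‖ ≤ L₂ * ‖x - y‖)
    (x g v : EuclideanSpace ℝ (Fin d)) (hv : ‖v‖ = 1)
    (hg : ‖g - gradient f x‖ ≤ ε₄) (hε₄ : ε₄ ≤ ε₂ ^ 2 / (24 * L₂))
    (H : EuclideanSpace ℝ (Fin d) →L[ℝ] EuclideanSpace ℝ (Fin d))
    (hHsym : IsSelfAdjoint H) (hH : ‖H - fderiv ℝ (gradient f) x‖ ≤ ε₂ / 24)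
    (η : ℝ) (hη : η = ε₂ / L₂ * sgn ⟪v, g⟫) :
    f (x - η • v) - f x ≤ ε₂ ^ 3 / (24 * L₂ ^ 2) + ε₂ ^ 3 / (48 * L₂ ^ 2)
      + ε₂ ^ 2 / (2 * L₂ ^ 2) * ⟪H v, v⟫ + ε₂ ^ 3 / (6 * L₂ ^ 2) ∧
    f x - f (x - η • v) ≥
      -(ε₂ ^ 2 / (2 * L₂ ^ 2)) * ⟪H v, v⟫ - 11 * ε₂ ^ 3 / (48 * L₂ ^ 2) := by
  set H₀ := fderiv ℝ (gradient f) x with hH₀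
  have hdivpos : 0 < ε₂ / L₂ := div_pos hε₂ hL₂
  have hηabs : |η| = ε₂ / L₂ := by
    rw [hη, abs_mul, abs_sgn, mul_one, abs_of_pos hdivpos]
  have hη2 : η ^ 2 = ε₂ ^ 2 / L₂ ^ 2 := by
    rw [← sq_abs, hηabs, div_pow]
  have hxy : x - η • v = x + (-η) • v := by rw [neg_smul, ← sub_eq_add_neg]
  have hT0 := taylor_cubic L₂ f hf hf' hlip x ((-η) • v)
  rw [← hH₀] at hT0
  -- rewrite pieces
  have hA : ⟪gradient f x, (-η) • v⟫ = -η * ⟪gradient f x, v⟫ := real_inner_smul_right _ _ _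
  have hB : ⟪H₀ ((-η) • v), (-η) • v⟫ = η ^ 2 * ⟪H₀ v, v⟫ := by
    rw [map_smul, real_inner_smul_left, real_inner_smul_right]; ring
  have hC : ‖(-η) • v‖ ^ 3 = (ε₂ / L₂) ^ 3 := by
    rw [norm_smul, hv, mul_one, Real.norm_eq_abs, abs_neg, hηabs]
  rw [hA, hB, hC] at hT0
  -- bound the gradient term
  have hkey1 : -η * ⟪gradient f x, v⟫ ≤ ε₂ / L₂ * ε₄ := by
    have hsplit : -η * ⟪gradient f x, v⟫
        = -(η * ⟪g, v⟫) + η * ⟪g - gradient f x, v⟫ := by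
      rw [inner_sub_left]; ring
    have h1 : 0 ≤ η * ⟪g, v⟫ := by
      rw [hη, real_inner_comm g v, mul_assoc, sgn_mul_self]
      positivity
    have h2 : η * ⟪g - gradient f x, v⟫ ≤ ε₂ / L₂ * ε₄ := by
      have habs := abs_real_inner_le_norm (g - gradient f x) v
      rw [hv, mul_one] at habs
      calc η * ⟪g - gradient f x, v⟫ ≤ |η * ⟪g - gradient f x, v⟫| := le_abs_self _
        _ = |η| * |⟪g - gradient f x, v⟫| := abs_mul _ _
        _ ≤ (ε₂ / L₂) * ε₄ := by
            rw [hηabs]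
            exact mul_le_mul_of_nonneg_left (habs.trans hg) hdivpos.le
    linarith [hsplit]
  -- bound the Hessian term
  have hkey2 : ⟪H₀ v, v⟫ ≤ ⟪H v, v⟫ + ε₂ / 24 := by
    have h1 : ⟪H₀ v - H v, v⟫ ≤ ε₂ / 24 := by
      have h2 := abs_real_inner_le_norm (H₀ v - H v) v
      rw [hv, mul_one] at h2
      have h3 : ‖H₀ v - H v‖ ≤ ‖H - H₀‖ := by
        have h4 := (H₀ - H).le_opNorm v
        rw [ContinuousLinearMap.sub_apply, hv, mul_one, norm_sub_rev H₀ H] at h4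
        exact h4
      calc ⟪H₀ v - H v, v⟫ ≤ |⟪H₀ v - H v, v⟫| := le_abs_self _
        _ ≤ ‖H₀ v - H v‖ := h2
        _ ≤ ε₂ / 24 := h3.trans hH
    rw [inner_sub_left] at h1
    linarith
  -- numeric assembly
  have e3 : ε₂ / L₂ * ε₄ ≤ ε₂ ^ 3 / (24 * L₂ ^ 2) := by
    have := mul_le_mul_of_nonneg_left hε₄ hdivpos.le
    calc ε₂ / L₂ * ε₄ ≤ ε₂ / L₂ * (ε₂ ^ 2 / (24 * L₂)) := this
      _ = ε₂ ^ 3 / (24 * L₂ ^ 2) := by field_simp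
  have e4 : L₂ / 6 * (ε₂ / L₂) ^ 3 = ε₂ ^ 3 / (6 * L₂ ^ 2) := by
    field_simp
  have e5 : (1:ℝ)/2 * (η ^ 2 * ⟪H₀ v, v⟫)
      ≤ ε₂ ^ 2 / (2 * L₂ ^ 2) * ⟪H v, v⟫ + ε₂ ^ 3 / (48 * L₂ ^ 2) := by
    have hη2pos : 0 ≤ η ^ 2 / 2 := by positivity
    have := mul_le_mul_of_nonneg_left hkey2 hη2pos
    have heq : η ^ 2 / 2 * (⟪H v, v⟫ + ε₂ / 24)
        = ε₂ ^ 2 / (2 * L₂ ^ 2) * ⟪H v, v⟫ + ε₂ ^ 3 / (48 * L₂ ^ 2) := by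
      rw [hη2]; field_simp; ring
    linarith [this, heq.ge]
  have main : f (x - η • v) - f x ≤ ε₂ ^ 3 / (24 * L₂ ^ 2) + ε₂ ^ 3 / (48 * L₂ ^ 2)
      + ε₂ ^ 2 / (2 * L₂ ^ 2) * ⟪H v, v⟫ + ε₂ ^ 3 / (6 * L₂ ^ 2) := by
    rw [hxy]
    linarith [hT0, hkey1, e3, e4.le, e4.ge, e5]
  refine ⟨main, ?_⟩
  have h24 : ε₂ ^ 3 / (24 * L₂ ^ 2) = 2 * (ε₂ ^ 3 / (48 * L₂ ^ 2)) := by ring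
  have h6 : ε₂ ^ 3 / (6 * L₂ ^ 2) = 8 * (ε₂ ^ 3 / (48 * L₂ ^ 2)) := by ring
  have h11 : 11 * ε₂ ^ 3 / (48 * L₂ ^ 2) = 11 * (ε₂ ^ 3 / (48 * L₂ ^ 2)) := by ring
  have hneg : -(ε₂ ^ 2 / (2 * L₂ ^ 2)) * ⟪H v, v⟫
      = -(ε₂ ^ 2 / (2 * L₂ ^ 2) * ⟪H v, v⟫) := by ring
  linarith [main]
end

section
/- Suppose f : ℝ^d → ℝ is differentiable with L₁-Lipschitz gradient and g ∈ ℝ^d satisfies ‖g - ∇f(x)‖ ≤ ε₄ with ε₄ ≤ ε₁/(2√2). Let x⁺ = x - g/L₁. Then f(x⁺) - f(x) ≤ -(1/(4L₁))‖g‖² + ε₁²/(8L₁). -/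
open scoped RealInnerProductSpace

lemma descent_aux {E : Type*} [NormedAddCommGroup E] [InnerProductSpace ℝ E]
    (f : E → ℝ) (hf : Differentiable ℝ f) (L : ℝ)
    (hlipf : ∀ x y, ‖fderiv ℝ f x - fderiv ℝ f y‖ ≤ L * ‖x - y‖) (x y : E) :
    f y ≤ f x + fderiv ℝ f x (y - x) + L / 2 * ‖y - x‖ ^ 2 := by
  set v := y - x with hv
  set φ : ℝ → ℝ := fun t => f (x + t • v) - t * fderiv ℝ f x v - L / 2 * t ^ 2 * ‖v‖ ^ 2 with hφ
  have hline : ∀ t : ℝ, HasDerivAt (fun t : ℝ => x + t • v) v t := by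
    intro t
    simpa using ((hasDerivAt_id t).smul_const v).const_add x
  have hφ' : ∀ t : ℝ, HasDerivAt φ
      (fderiv ℝ f (x + t • v) v - fderiv ℝ f x v - L * t * ‖v‖ ^ 2) t := by
    intro t
    have h1 : HasDerivAt (fun t : ℝ => f (x + t • v)) (fderiv ℝ f (x + t • v) v) t :=
      (hf.differentiableAt.hasFDerivAt).comp_hasDerivAt t (hline t)
    have h2 : HasDerivAt (fun t : ℝ => t * fderiv ℝ f x v) (fderiv ℝ f x v) t := by
      simpa using (hasDerivAt_id t).mul_const (fderiv ℝ f x v)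
    have h3 : HasDerivAt (fun t : ℝ => L / 2 * t ^ 2 * ‖v‖ ^ 2) (L * t * ‖v‖ ^ 2) t := by
      have := ((hasDerivAt_pow 2 t).const_mul (L / 2)).mul_const (‖v‖ ^ 2)
      refine this.congr_deriv ?_
      ring
    exact (h1.sub h2).sub h3
  have hanti : AntitoneOn φ (Set.Icc 0 1) := by
    apply antitoneOn_of_deriv_nonpos (convex_Icc 0 1)
    · exact Continuous.continuousOn (by
        have : Continuous φ := by
          apply Continuous.sub (Continuous.sub ?_ (by continuity)) (by continuity)
          exact hf.continuous.comp (by continuity)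
        exact this)
    · intro t ht
      exact ((hφ' t).differentiableAt).differentiableWithinAt
    · intro t ht
      rw [interior_Icc] at ht
      rw [(hφ' t).deriv]
      have h4 : fderiv ℝ f (x + t • v) v - fderiv ℝ f x v ≤ L * t * ‖v‖ ^ 2 := by
        have := (fderiv ℝ f (x + t • v) - fderiv ℝ f x).le_opNorm v
        have h5 := hlipf (x + t • v) x
        simp only [add_sub_cancel_left] at h5
        have h6 : ‖t • v‖ = t * ‖v‖ := by
          rw [norm_smul, Real.norm_eq_abs, abs_of_pos ht.1]
        calc fderiv ℝ f (x + t • v) v - fderiv ℝ f x v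
            ≤ ‖fderiv ℝ f (x + t • v) - fderiv ℝ f x‖ * ‖v‖ := by
              have habs : |fderiv ℝ f (x + t • v) v - fderiv ℝ f x v| ≤
                  ‖fderiv ℝ f (x + t • v) - fderiv ℝ f x‖ * ‖v‖ := by simpa using this
              exact le_trans (le_abs_self _) habs
          _ ≤ L * (t * ‖v‖) * ‖v‖ := by
              apply mul_le_mul_of_nonneg_right _ (norm_nonneg v)
              rw [h6] at h5; exact h5
          _ = L * t * ‖v‖ ^ 2 := by ring
      linarith
  have := hanti (Set.left_mem_Icc.2 one_pos.le) (Set.right_mem_Icc.2 one_pos.le) one_pos.le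
  simp only [hφ, one_smul, zero_smul, add_zero, one_pow, zero_pow, mul_zero, mul_one,
    zero_mul, sub_zero, one_mul] at this
  have hxy : x + v = y := by rw [hv]; abel
  rw [hxy] at this
  linarith

theorem stmt_4 {d : ℕ} (L₁ ε₁ ε₄ : ℝ) (hL₁ : 0 < L₁) (hε₁ : 0 < ε₁)
    (f : EuclideanSpace ℝ (Fin d) → ℝ) (hf : Differentiable ℝ f)
    (hlip : ∀ x y, ‖gradient f x - gradient f y‖ ≤ L₁ * ‖x - y‖)
    (x g : EuclideanSpace ℝ (Fin d))
    (hg : ‖g - gradient f x‖ ≤ ε₄) (hε₄ : ε₄ ≤ ε₁ / (2 * Real.sqrt 2)) :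
    f (x - L₁⁻¹ • g) - f x ≤ -(1 / (4 * L₁)) * ‖g‖ ^ 2 + ε₁ ^ 2 / (8 * L₁) := by
  have hfd : ∀ z v, fderiv ℝ f z v = ⟪gradient f z, v⟫ := by
    intro z v
    rw [gradient]
    exact (InnerProductSpace.toDual_symm_apply).symm
  have hlipf : ∀ a b, ‖fderiv ℝ f a - fderiv ℝ f b‖ ≤ L₁ * ‖a - b‖ := by
    intro a b
    have : ‖fderiv ℝ f a - fderiv ℝ f b‖ = ‖gradient f a - gradient f b‖ := by
      rw [gradient, gradient, ← LinearIsometryEquiv.map_sub, LinearIsometryEquiv.norm_map]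
    rw [this]; exact hlip a b
  have key := descent_aux f hf L₁ hlipf x (x - L₁⁻¹ • g)
  have hvx : x - L₁⁻¹ • g - x = -(L₁⁻¹ • g) := by abel
  rw [hvx, hfd] at key
  have hinner : ⟪gradient f x, -(L₁⁻¹ • g)⟫ = -(L₁⁻¹ * ⟪gradient f x, g⟫) := by
    rw [inner_neg_right, real_inner_smul_right]
  have hnorm : ‖-(L₁⁻¹ • g)‖ ^ 2 = L₁⁻¹ ^ 2 * ‖g‖ ^ 2 := by
    rw [norm_neg, norm_smul, mul_pow]
    congr 1
    rw [Real.norm_eq_abs, sq_abs]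
  rw [hinner, hnorm] at key
  -- ⟪∇f x, g⟫ = ‖g‖² + ⟪∇f x - g, g⟫ ≥ ‖g‖² - ε₄‖g‖
  have hip : ⟪gradient f x, g⟫ ≥ ‖g‖ ^ 2 - ε₄ * ‖g‖ := by
    have h1 : ⟪gradient f x, g⟫ = ⟪g, g⟫ + ⟪gradient f x - g, g⟫ := by
      rw [← inner_add_left]; congr 1; abel
    have h2 : |⟪gradient f x - g, g⟫| ≤ ε₄ * ‖g‖ := by
      calc |⟪gradient f x - g, g⟫| ≤ ‖gradient f x - g‖ * ‖g‖ := abs_real_inner_le_norm _ _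
        _ ≤ ε₄ * ‖g‖ := by
            apply mul_le_mul_of_nonneg_right _ (norm_nonneg g)
            rw [← norm_neg]; simpa using hg
    rw [h1, real_inner_self_eq_norm_sq]
    nlinarith [abs_le.1 h2]
  have hε₄0 : 0 ≤ ε₄ := le_trans (norm_nonneg _) hg
  have hε₄sq : ε₄ ^ 2 ≤ ε₁ ^ 2 / 8 := by
    have h8 : (2 * Real.sqrt 2) ^ 2 = 8 := by
      rw [mul_pow, Real.sq_sqrt (by norm_num : (2:ℝ) ≥ 0)]; norm_num
    have hpos : (0:ℝ) < 2 * Real.sqrt 2 := by positivity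
    have := pow_le_pow_left₀ hε₄0 hε₄ 2
    rw [div_pow, h8] at this
    exact this
  have hAM : ε₄ * ‖g‖ ≤ ε₄ ^ 2 + ‖g‖ ^ 2 / 4 := by nlinarith [sq_nonneg (ε₄ - ‖g‖ / 2)]
  have hLinv : (0:ℝ) < L₁⁻¹ := inv_pos.2 hL₁
  have hfinal : f (x - L₁⁻¹ • g) - f x ≤
      -(L₁⁻¹ * ⟪gradient f x, g⟫) + L₁ / 2 * (L₁⁻¹ ^ 2 * ‖g‖ ^ 2) := by linarith
  have hL2 : L₁ / 2 * (L₁⁻¹ ^ 2 * ‖g‖ ^ 2) = ‖g‖ ^ 2 / (2 * L₁) := by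
    field_simp
  rw [hL2] at hfinal
  have step : -(L₁⁻¹ * ⟪gradient f x, g⟫) ≤ -(L₁⁻¹ * (‖g‖ ^ 2 - ε₄ * ‖g‖)) := by
    apply neg_le_neg; exact mul_le_mul_of_nonneg_left hip hLinv.le
  have hInv : L₁⁻¹ = 1 / L₁ := by rw [one_div]
  calc f (x - L₁⁻¹ • g) - f x ≤ -(L₁⁻¹ * (‖g‖ ^ 2 - ε₄ * ‖g‖)) + ‖g‖ ^ 2 / (2 * L₁) := by
        linarith
    _ ≤ -(1 / (4 * L₁)) * ‖g‖ ^ 2 + ε₁ ^ 2 / (8 * L₁) := by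
        have key2 : 8 * (ε₄ * ‖g‖) ≤ 2 * ‖g‖ ^ 2 + ε₁ ^ 2 := by nlinarith
        rw [hInv, ← sub_nonneg]
        have heq : -(1 / (4 * L₁)) * ‖g‖ ^ 2 + ε₁ ^ 2 / (8 * L₁) -
            (-(1 / L₁ * (‖g‖ ^ 2 - ε₄ * ‖g‖)) + ‖g‖ ^ 2 / (2 * L₁)) =
            (2 * ‖g‖ ^ 2 + ε₁ ^ 2 - 8 * (ε₄ * ‖g‖)) / (8 * L₁) := by
          field_simp; ring
        rw [heq]
        apply div_nonneg (by linarith) (by positivity)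
end

section
/- If each non-terminal step of SNCG-2 decreases f by at least ε₁²/(8L₁) when it is an SG step and by at least ε₂³/(48L₂²) when it is an NCG-S step, and f(x₀) - inf f ≤ Δ, then the number of SG steps is at most (8L₁/ε₁²)·Δ and the number of NCG-S steps is at most 1 + (48L₂²/ε₂³)·Δ. -/
theorem stmt_17 (a : ℕ → ℝ) (Δ L₁ L₂ ε₁ ε₂ : ℝ) (J : ℕ)
    (hL₁ : 0 < L₁) (hL₂ : 0 < L₂) (hε₁ : 0 < ε₁) (hε₂ : 0 < ε₂)
    (SG NC : Finset ℕ) (hdisj : Disjoint SG NC)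
    (hcover : SG ∪ NC = Finset.range J)
    (hmono : ∀ j < J, a (j + 1) ≤ a j)
    (hSG : ∀ j ∈ SG, a j - a (j + 1) ≥ ε₁ ^ 2 / (8 * L₁))
    (hNC : ∀ j ∈ NC, j ≠ J - 1 → a j - a (j + 1) ≥ ε₂ ^ 3 / (48 * L₂ ^ 2))
    (hΔ : a 0 - a J ≤ Δ) :
    (SG.card : ℝ) ≤ 8 * L₁ / ε₁ ^ 2 * Δ ∧
    (NC.card : ℝ) ≤ 1 + 48 * L₂ ^ 2 / ε₂ ^ 3 * Δ := by
  have htel : ∑ j ∈ Finset.range J, (a j - a (j + 1)) = a 0 - a J :=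
    Finset.sum_range_sub' a J
  have hnonneg : ∀ j ∈ Finset.range J, 0 ≤ a j - a (j + 1) := by
    intro j hj
    have := hmono j (Finset.mem_range.mp hj)
    linarith
  have hsub : ∀ (T : Finset ℕ), T ⊆ Finset.range J →
      ∑ j ∈ T, (a j - a (j + 1)) ≤ Δ := by
    intro T hT
    calc ∑ j ∈ T, (a j - a (j + 1)) ≤ ∑ j ∈ Finset.range J, (a j - a (j + 1)) :=
          Finset.sum_le_sum_of_subset_of_nonneg hT (fun j hj _ => hnonneg j hj)
      _ ≤ Δ := by rw [htel]; exact hΔ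
  have hSGsub : SG ⊆ Finset.range J := hcover ▸ Finset.subset_union_left
  have hNCsub : NC ⊆ Finset.range J := hcover ▸ Finset.subset_union_right
  have hδ1 : 0 < ε₁ ^ 2 / (8 * L₁) := by positivity
  have hδ2 : 0 < ε₂ ^ 3 / (48 * L₂ ^ 2) := by positivity
  constructor
  · have h1 : (SG.card : ℝ) * (ε₁ ^ 2 / (8 * L₁)) ≤ Δ := by
      calc (SG.card : ℝ) * (ε₁ ^ 2 / (8 * L₁))
          = ∑ _j ∈ SG, (ε₁ ^ 2 / (8 * L₁)) := by
            rw [Finset.sum_const, nsmul_eq_mul]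
        _ ≤ ∑ j ∈ SG, (a j - a (j + 1)) := Finset.sum_le_sum (fun j hj => hSG j hj)
        _ ≤ Δ := hsub SG hSGsub
    calc (SG.card : ℝ) = SG.card * (ε₁ ^ 2 / (8 * L₁)) * (8 * L₁ / ε₁ ^ 2) := by
            field_simp
        _ ≤ Δ * (8 * L₁ / ε₁ ^ 2) := by
            apply mul_le_mul_of_nonneg_right h1; positivity
        _ = 8 * L₁ / ε₁ ^ 2 * Δ := by ring
  · have hcard : NC.card ≤ (NC \ {J - 1}).card + 1 := by
      have := Finset.card_sdiff_add_card_eq_card (Finset.sdiff_subset (s := NC) (t := {J - 1}))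
      have h2 : (NC \ (NC \ {J - 1})).card ≤ 1 := by
        calc (NC \ (NC \ {J - 1})).card ≤ ({J - 1} : Finset ℕ).card := by
              apply Finset.card_le_card
              intro x hx
              simp only [Finset.mem_sdiff, not_and, not_not] at hx
              exact hx.2 hx.1
          _ = 1 := Finset.card_singleton _
      omega
    have h1 : ((NC \ {J - 1}).card : ℝ) * (ε₂ ^ 3 / (48 * L₂ ^ 2)) ≤ Δ := by
      calc ((NC \ {J - 1}).card : ℝ) * (ε₂ ^ 3 / (48 * L₂ ^ 2))
          = ∑ _j ∈ NC \ {J - 1}, (ε₂ ^ 3 / (48 * L₂ ^ 2)) := by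
            rw [Finset.sum_const, nsmul_eq_mul]
        _ ≤ ∑ j ∈ NC \ {J - 1}, (a j - a (j + 1)) := by
            apply Finset.sum_le_sum
            intro j hj
            rw [Finset.mem_sdiff, Finset.mem_singleton] at hj
            exact hNC j hj.1 hj.2
        _ ≤ Δ := hsub _ (Finset.sdiff_subset.trans hNCsub)
    have h2 : ((NC \ {J - 1}).card : ℝ) ≤ 48 * L₂ ^ 2 / ε₂ ^ 3 * Δ := by
      calc ((NC \ {J - 1}).card : ℝ)
          = (NC \ {J - 1}).card * (ε₂ ^ 3 / (48 * L₂ ^ 2)) * (48 * L₂ ^ 2 / ε₂ ^ 3) := by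
            field_simp
        _ ≤ Δ * (48 * L₂ ^ 2 / ε₂ ^ 3) := by
            apply mul_le_mul_of_nonneg_right h1; positivity
        _ = 48 * L₂ ^ 2 / ε₂ ^ 3 * Δ := by ring
    have : (NC.card : ℝ) ≤ (NC \ {J - 1}).card + 1 := by exact_mod_cast hcard
    linarith
end
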